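/- arXiv:1712.08780 — 4 statements merged into one kernel-verified Lean document; each statement's English description precedes it below -/
import Mathlib

section
/- For any graphs G and H, the Grundy total domination number of the direct product G × H is at least the product of the Grundy total domination numbers of G and H: γ_gr^t(G × H) ≥ γ_gr^t(G) · γ_gr^t(H). -/
open SimpleGraph

/-- A legal open neighborhood sequence in `G`. -/
def IsOpenLegal {α : Type*} (G : SimpleGraph α) (L : List α) : Prop :=
  L.Nodup ∧ ∀ i : Fin L.length, ∃ w, G.Adj (L.get i) w ∧
    ∀ j : Fin L.length, j < i → ¬ G.Adj (L.get j) w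

/-- The Grundy total domination number of `G`. -/
noncomputable def grundyT {α : Type*} (G : SimpleGraph α) : ℕ :=
  sSup {n | ∃ L : List α, IsOpenLegal G L ∧ L.length = n}

/-- A legal closed neighborhood (dominating) sequence in `G`. -/
def IsClosedLegal {α : Type*} (G : SimpleGraph α) (L : List α) : Prop :=
  L.Nodup ∧ ∀ i : Fin L.length, ∃ w, (G.Adj (L.get i) w ∨ L.get i = w) ∧
    ∀ j : Fin L.length, j < i → ¬ (G.Adj (L.get j) w ∨ L.get j = w)

/-- The Grundy domination number of `G`. -/
noncomputable def grundyDom {α : Type*} (G : SimpleGraph α) : ℕ :=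
  sSup {n | ∃ L : List α, IsClosedLegal G L ∧ L.length = n}

/-- The direct (tensor) product of simple graphs. -/
def directProd {α β : Type*} (G : SimpleGraph α) (H : SimpleGraph β) : SimpleGraph (α × β) where
  Adj x y := G.Adj x.1 y.1 ∧ H.Adj x.2 y.2
  symm := ⟨fun _ _ h => ⟨h.1.symm, h.2.symm⟩⟩
  loopless := ⟨fun x h => G.irrefl h.1⟩

/-- The lexicographic product of simple graphs. -/
def lexProd {α β : Type*} (G : SimpleGraph α) (H : SimpleGraph β) : SimpleGraph (α × β) where
  Adj x y := G.Adj x.1 y.1 ∨ (x.1 = y.1 ∧ H.Adj x.2 y.2)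
  symm := by
    constructor
    rintro x y (h | ⟨h1, h2⟩)
    · exact Or.inl h.symm
    · exact Or.inr ⟨h1.symm, h2.symm⟩
  loopless := by
    constructor
    rintro x (h | ⟨_, h⟩)
    · exact G.irrefl h
    · exact H.irrefl h

/-- The strong product of simple graphs. -/
def strongProd {α β : Type*} (G : SimpleGraph α) (H : SimpleGraph β) : SimpleGraph (α × β) where
  Adj x y := (G.Adj x.1 y.1 ∧ x.2 = y.2) ∨ (x.1 = y.1 ∧ H.Adj x.2 y.2) ∨
    (G.Adj x.1 y.1 ∧ H.Adj x.2 y.2)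
  symm := by
    constructor
    rintro x y (⟨h, e⟩ | ⟨e, h⟩ | ⟨h1, h2⟩)
    · exact Or.inl ⟨h.symm, e.symm⟩
    · exact Or.inr (Or.inl ⟨e.symm, h.symm⟩)
    · exact Or.inr (Or.inr ⟨h1.symm, h2.symm⟩)
  loopless := by
    constructor
    rintro x (⟨h, _⟩ | ⟨_, h⟩ | ⟨h, _⟩)
    · exact G.irrefl h
    · exact H.irrefl h
    · exact G.irrefl h

/-- The minimum number of complete bipartite subgraphs of `G` covering all edges of `G`. -/
noncomputable def bc {α : Type*} (G : SimpleGraph α) : ℕ :=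
  sInf {k | ∃ A B : Fin k → Set α,
    (∀ i a b, a ∈ A i → b ∈ B i → G.Adj a b) ∧
    (∀ u v, G.Adj u v → ∃ i, (u ∈ A i ∧ v ∈ B i) ∨ (v ∈ A i ∧ u ∈ B i))}

/-- `aD G L` is the number of entries of `L` not adjacent to any earlier entry. -/
noncomputable def aD {α : Type*} (G : SimpleGraph α) (L : List α) : ℕ :=
  {i : Fin L.length | ∀ j : Fin L.length, j < i → ¬ G.Adj (L.get j) (L.get i)}.ncard

/-- The vertex cover number of `G`. -/
noncomputable def vertexCoverNum {α : Type*} (G : SimpleGraph α) : ℕ :=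
  sInf {n | ∃ S : Finset α, S.card = n ∧ ∀ u v, G.Adj u v → u ∈ S ∨ v ∈ S}

/-- The independence number of `G`. -/
noncomputable def indepNum {α : Type*} (G : SimpleGraph α) : ℕ :=
  sSup {n | ∃ S : Finset α, S.card = n ∧ ∀ u ∈ S, ∀ v ∈ S, ¬ G.Adj u v}

lemma grundy_bddAbove {α : Type*} [Fintype α] (G : SimpleGraph α) :
    BddAbove {n | ∃ L : List α, IsOpenLegal G L ∧ L.length = n} := by
  refine ⟨Fintype.card α, ?_⟩
  rintro n ⟨L, hL, rfl⟩
  exact hL.1.length_le_card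

lemma grundy_nonempty {α : Type*} (G : SimpleGraph α) :
    {n | ∃ L : List α, IsOpenLegal G L ∧ L.length = n}.Nonempty :=
  ⟨0, [], ⟨List.nodup_nil, fun i => i.elim0⟩, rfl⟩

lemma exists_grundy_list {α : Type*} [Fintype α] (G : SimpleGraph α) :
    ∃ L : List α, IsOpenLegal G L ∧ L.length = grundyT G :=
  Nat.sSup_mem (grundy_nonempty G) (grundy_bddAbove G)

lemma legal_product {α β : Type*} (G : SimpleGraph α) (H : SimpleGraph β)
    {L : List α} {M : List β} (hL : IsOpenLegal G L) (hM : IsOpenLegal H M) :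
    ∃ P : List (α × β), IsOpenLegal (directProd G H) P ∧
      P.length = L.length * M.length := by
  set m := L.length with hm
  set n := M.length with hn
  have hdiv : ∀ k : Fin (m * n), (k : ℕ) / n < m := by
    intro k
    exact Nat.div_lt_of_lt_mul (Nat.lt_of_lt_of_eq k.isLt (Nat.mul_comm m n))
  have hmod : ∀ k : Fin (m * n), (k : ℕ) % n < n := by
    intro k
    have hk := k.isLt
    have hn0 : 0 < n := by
      rcases Nat.eq_zero_or_pos n with h | h
      · have h0 : m * n = 0 := by rw [h, Nat.mul_zero]
        omega
      · exact h
    exact Nat.mod_lt _ hn0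
  set f : Fin (m * n) → α × β := fun k =>
    (L.get ⟨(k : ℕ) / n, hdiv k⟩, M.get ⟨(k : ℕ) % n, hmod k⟩) with hf
  refine ⟨List.ofFn f, ⟨?_, ?_⟩, by simp⟩
  · rw [List.nodup_ofFn]
    intro k k' hkk
    have h1 : L.get ⟨(k : ℕ) / n, hdiv k⟩ = L.get ⟨(k' : ℕ) / n, hdiv k'⟩ :=
      congrArg Prod.fst hkk
    have h2 : M.get ⟨(k : ℕ) % n, hmod k⟩ = M.get ⟨(k' : ℕ) % n, hmod k'⟩ :=
      congrArg Prod.snd hkk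
    have hd : (k : ℕ) / n = (k' : ℕ) / n := by
      have := (List.Nodup.get_inj_iff hL.1).mp h1
      exact congrArg Fin.val this
    have hmd : (k : ℕ) % n = (k' : ℕ) % n := by
      have := (List.Nodup.get_inj_iff hM.1).mp h2
      exact congrArg Fin.val this
    apply Fin.ext
    rw [← Nat.div_add_mod (k : ℕ) n, ← Nat.div_add_mod (k' : ℕ) n, hd, hmd]
  · intro i
    have hlen : (List.ofFn f).length = m * n := List.length_ofFn
    set i' : Fin (m * n) := Fin.cast hlen i with hi'
    have hgi : (List.ofFn f).get i = f i' := List.get_ofFn f i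
    set a : Fin L.length := ⟨(i' : ℕ) / n, hdiv i'⟩ with ha
    set b : Fin M.length := ⟨(i' : ℕ) % n, hmod i'⟩ with hb
    obtain ⟨w, hw, hw'⟩ := hL.2 a
    obtain ⟨z, hz, hz'⟩ := hM.2 b
    refine ⟨(w, z), ?_, ?_⟩
    · rw [hgi]
      exact ⟨hw, hz⟩
    · intro j hj hadj
      set j' : Fin (m * n) := Fin.cast hlen j with hj'
      have hgj : (List.ofFn f).get j = f j' := List.get_ofFn f j
      rw [hgj] at hadj
      obtain ⟨hG, hH⟩ := hadj
      have hji : (j' : ℕ) < (i' : ℕ) := hj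
      have hdle : (j' : ℕ) / n ≤ (i' : ℕ) / n := Nat.div_le_div_right hji.le
      rcases lt_or_eq_of_le hdle with hlt | heq
      · exact hw' ⟨(j' : ℕ) / n, hdiv j'⟩ hlt hG
      · have hmlt : (j' : ℕ) % n < (i' : ℕ) % n := by
          by_contra hcon
          push_neg at hcon
          have e1 := Nat.div_add_mod (j' : ℕ) n
          have e2 := Nat.div_add_mod (i' : ℕ) n
          rw [heq] at e1
          omega
        exact hz' ⟨(j' : ℕ) % n, hmod j'⟩ hmlt hH

theorem grundyT_directProd_ge {α β : Type*} [Fintype α] [Fintype β]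
    (G : SimpleGraph α) (H : SimpleGraph β) :
    grundyT G * grundyT H ≤ grundyT (directProd G H) := by
  obtain ⟨L, hL, hLlen⟩ := exists_grundy_list G
  obtain ⟨M, hM, hMlen⟩ := exists_grundy_list H
  obtain ⟨P, hP, hPlen⟩ := legal_product G H hL hM
  exact le_csSup (grundy_bddAbove _) ⟨P, hP, by rw [hPlen, hLlen, hMlen]⟩
end

section
/- The direct product K_{k1,k2} × K_{ℓ1,ℓ2} of two complete bipartite graphs is isomorphic to the disjoint union of the complete bipartite graphs K_{k1·ℓ1, k2·ℓ2} and K_{k1·ℓ2, k2·ℓ1}. -/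
open SimpleGraph

def bipartEquiv (k₁ k₂ l₁ l₂ : ℕ) :
    ((Fin k₁ ⊕ Fin k₂) × (Fin l₁ ⊕ Fin l₂)) ≃
      ((Fin (k₁ * l₁) ⊕ Fin (k₂ * l₂)) ⊕ (Fin (k₁ * l₂) ⊕ Fin (k₂ * l₁))) where
  toFun x := match x with
    | (Sum.inl a, Sum.inl b) => Sum.inl (Sum.inl (finProdFinEquiv (a, b)))
    | (Sum.inr a, Sum.inr b) => Sum.inl (Sum.inr (finProdFinEquiv (a, b)))
    | (Sum.inl a, Sum.inr b) => Sum.inr (Sum.inl (finProdFinEquiv (a, b)))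
    | (Sum.inr a, Sum.inl b) => Sum.inr (Sum.inr (finProdFinEquiv (a, b)))
  invFun y := match y with
    | Sum.inl (Sum.inl c) => (Sum.inl (finProdFinEquiv.symm c).1, Sum.inl (finProdFinEquiv.symm c).2)
    | Sum.inl (Sum.inr c) => (Sum.inr (finProdFinEquiv.symm c).1, Sum.inr (finProdFinEquiv.symm c).2)
    | Sum.inr (Sum.inl c) => (Sum.inl (finProdFinEquiv.symm c).1, Sum.inr (finProdFinEquiv.symm c).2)
    | Sum.inr (Sum.inr c) => (Sum.inr (finProdFinEquiv.symm c).1, Sum.inl (finProdFinEquiv.symm c).2)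
  left_inv := by rintro ⟨a | a, b | b⟩ <;> simp
  right_inv := by rintro ((c | c) | (c | c)) <;> exact congrArg _ (congrArg _ (finProdFinEquiv.apply_symm_apply c))

theorem directProd_completeBipartite_iso (k₁ k₂ l₁ l₂ : ℕ) :
    Nonempty ((directProd (completeBipartiteGraph (Fin k₁) (Fin k₂))
        (completeBipartiteGraph (Fin l₁) (Fin l₂))) ≃g
      (completeBipartiteGraph (Fin (k₁ * l₁)) (Fin (k₂ * l₂)) ⊕g
        completeBipartiteGraph (Fin (k₁ * l₂)) (Fin (k₂ * l₁)))) := by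
  exact ⟨⟨bipartEquiv k₁ k₂ l₁ l₂, by
    rintro ⟨a | a, b | b⟩ ⟨a' | a', b' | b'⟩ <;>
      simp [bipartEquiv, directProd]⟩⟩
end

section
/- If G_1 and G_2 are graphs with γ_gr^t(G_i) = 2·bc(G_i) for i = 1,2, then γ_gr^t(G_1 × G_2) = 2·bc(G_1 × G_2). -/
open SimpleGraph

section Aux

variable {α β : Type*}

lemma isOpenLegal_nil (G : SimpleGraph α) : IsOpenLegal G ([] : List α) :=
  ⟨List.nodup_nil, fun i => absurd i.2 (by simp)⟩

lemma grundy_set_nonempty (G : SimpleGraph α) :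
    {n | ∃ L : List α, IsOpenLegal G L ∧ L.length = n}.Nonempty :=
  ⟨0, [], isOpenLegal_nil G, rfl⟩

lemma grundy_set_bdd [Fintype α] (G : SimpleGraph α) :
    BddAbove {n | ∃ L : List α, IsOpenLegal G L ∧ L.length = n} := by
  refine ⟨Fintype.card α, ?_⟩
  rintro n ⟨L, ⟨hnd, _⟩, rfl⟩
  exact hnd.length_le_card

lemma bc_mem [Fintype α] (G : SimpleGraph α) :
    bc G ∈ {k | ∃ A B : Fin k → Set α,
      (∀ i a b, a ∈ A i → b ∈ B i → G.Adj a b) ∧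
      (∀ u v, G.Adj u v → ∃ i, (u ∈ A i ∧ v ∈ B i) ∨ (v ∈ A i ∧ u ∈ B i))} := by
  apply Nat.sInf_mem
  classical
  set e := Fintype.equivFin (α × α) with he
  refine ⟨Fintype.card (α × α),
    fun i => if G.Adj (e.symm i).1 (e.symm i).2 then {(e.symm i).1} else ∅,
    fun i => if G.Adj (e.symm i).1 (e.symm i).2 then {(e.symm i).2} else ∅, ?_, ?_⟩
  · intro i a b ha hb
    by_cases h : G.Adj (e.symm i).1 (e.symm i).2
    · simp only [if_pos h, Set.mem_singleton_iff] at ha hb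
      subst ha; subst hb; exact h
    · simp [if_neg h] at ha
  · intro u v huv
    refine ⟨e (u, v), Or.inl ?_⟩
    simp [Equiv.symm_apply_apply, huv]

lemma isOpenLegal_length_le {k : ℕ} (G : SimpleGraph α) {L : List α}
    (hL : IsOpenLegal G L) {A B : Fin k → Set α}
    (hAB : ∀ i a b, a ∈ A i → b ∈ B i → G.Adj a b)
    (hcov : ∀ u v, G.Adj u v → ∃ i, (u ∈ A i ∧ v ∈ B i) ∨ (v ∈ A i ∧ u ∈ B i)) :
    L.length ≤ 2 * k := by
  classical
  obtain ⟨hnd, hleg⟩ := hL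
  choose w hw hw2 using hleg
  choose φ hφ using fun i => hcov _ _ (hw i)
  set f : Fin L.length → Fin k × Bool := fun i =>
    (φ i, if L.get i ∈ A (φ i) ∧ w i ∈ B (φ i) then true else false) with hf
  have key : ∀ i j : Fin L.length, j < i → f i = f j → False := by
    intro i j hji hfij
    have hφij : φ i = φ j := congrArg Prod.fst hfij
    have hb : (if L.get i ∈ A (φ i) ∧ w i ∈ B (φ i) then true else false)
        = (if L.get j ∈ A (φ j) ∧ w j ∈ B (φ j) then true else false) :=
      congrArg Prod.snd hfij
    by_cases hi : L.get i ∈ A (φ i) ∧ w i ∈ B (φ i)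
    · rw [if_pos hi] at hb
      have hj : L.get j ∈ A (φ j) ∧ w j ∈ B (φ j) := by
        by_contra hcon
        rw [if_neg hcon] at hb; exact Bool.noConfusion hb
      exact hw2 i j hji (hAB (φ i) _ _ (hφij ▸ hj.1) hi.2)
    · rw [if_neg hi] at hb
      have hj : ¬ (L.get j ∈ A (φ j) ∧ w j ∈ B (φ j)) := by
        by_contra hcon
        rw [if_pos (not_not.mp (by simpa using hcon))] at hb
        exact Bool.noConfusion hb
      have hi' : w i ∈ A (φ i) ∧ L.get i ∈ B (φ i) := (hφ i).resolve_left hi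
      have hj' : w j ∈ A (φ j) ∧ L.get j ∈ B (φ j) := (hφ j).resolve_left hj
      exact hw2 i j hji (hAB (φ i) _ _ hi'.1 (hφij ▸ hj'.2)).symm
  have hinj : Function.Injective f := by
    intro i j hfij
    rcases lt_trichotomy i j with h | h | h
    · exact absurd (key j i h hfij.symm) id
    · exact h
    · exact absurd (key i j h hfij) id
  calc L.length = Fintype.card (Fin L.length) := (Fintype.card_fin _).symm
    _ ≤ Fintype.card (Fin k × Bool) := Fintype.card_le_of_injective f hinj
    _ = 2 * k := by simp [mul_comm]

lemma grundyT_le_two_bc [Fintype α] (G : SimpleGraph α) : grundyT G ≤ 2 * bc G := by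
  obtain ⟨A, B, hAB, hcov⟩ := bc_mem G
  apply csSup_le (grundy_set_nonempty G)
  rintro n ⟨L, hL, rfl⟩
  exact isOpenLegal_length_le G hL hAB hcov

end Aux
section Aux2
variable {α β : Type*}

lemma bc_prod_le [Fintype α] [Fintype β] {k₁ k₂ : ℕ} (G₁ : SimpleGraph α) (G₂ : SimpleGraph β)
    {A₁ B₁ : Fin k₁ → Set α} {A₂ B₂ : Fin k₂ → Set β}
    (hAB₁ : ∀ i a b, a ∈ A₁ i → b ∈ B₁ i → G₁.Adj a b)
    (hc₁ : ∀ u v, G₁.Adj u v → ∃ i, (u ∈ A₁ i ∧ v ∈ B₁ i) ∨ (v ∈ A₁ i ∧ u ∈ B₁ i))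
    (hAB₂ : ∀ i a b, a ∈ A₂ i → b ∈ B₂ i → G₂.Adj a b)
    (hc₂ : ∀ u v, G₂.Adj u v → ∃ i, (u ∈ A₂ i ∧ v ∈ B₂ i) ∨ (v ∈ A₂ i ∧ u ∈ B₂ i)) :
    bc (directProd G₁ G₂) ≤ 2 * k₁ * k₂ := by
  apply Nat.sInf_le
  have hcard : Fintype.card (Fin k₁ × Fin k₂ × Bool) = 2 * k₁ * k₂ := by
    simp; ring
  set e : Fin (2 * k₁ * k₂) ≃ Fin k₁ × Fin k₂ × Bool :=
    (Fintype.equivFinOfCardEq hcard).symm with he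
  refine ⟨fun i => if (e i).2.2 then (A₁ (e i).1) ×ˢ (A₂ (e i).2.1)
      else (A₁ (e i).1) ×ˢ (B₂ (e i).2.1),
    fun i => if (e i).2.2 then (B₁ (e i).1) ×ˢ (B₂ (e i).2.1)
      else (B₁ (e i).1) ×ˢ (A₂ (e i).2.1), ?_, ?_⟩
  · intro i a b ha hb
    by_cases h : (e i).2.2
    · simp only [if_pos h, Set.mem_prod] at ha hb
      exact ⟨hAB₁ _ _ _ ha.1 hb.1, hAB₂ _ _ _ ha.2 hb.2⟩
    · simp only [if_neg h, Set.mem_prod] at ha hb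
      exact ⟨hAB₁ _ _ _ ha.1 hb.1, (hAB₂ _ _ _ hb.2 ha.2).symm⟩
  · rintro ⟨u, x⟩ ⟨v, y⟩ ⟨huv, hxy⟩
    obtain ⟨p, hp⟩ := hc₁ u v huv
    obtain ⟨q, hq⟩ := hc₂ x y hxy
    rcases hp with ⟨hu, hv⟩ | ⟨hv, hu⟩ <;> rcases hq with ⟨hx, hy⟩ | ⟨hy, hx⟩
    · exact ⟨e.symm (p, q, true), Or.inl (by simp [he]; exact ⟨⟨hu, hx⟩, hv, hy⟩)⟩
    · exact ⟨e.symm (p, q, false), Or.inl (by simp [he]; exact ⟨⟨hu, hx⟩, hv, hy⟩)⟩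
    · exact ⟨e.symm (p, q, false), Or.inr (by simp [he]; exact ⟨⟨hv, hy⟩, hu, hx⟩)⟩
    · exact ⟨e.symm (p, q, true), Or.inr (by simp [he]; exact ⟨⟨hv, hy⟩, hu, hx⟩)⟩

lemma grundyT_prod_ge [Fintype α] [Fintype β] (G₁ : SimpleGraph α) (G₂ : SimpleGraph β) :
    grundyT G₁ * grundyT G₂ ≤ grundyT (directProd G₁ G₂) := by
  obtain ⟨L, hL, hLlen⟩ := Nat.sSup_mem (grundy_set_nonempty G₁) (grundy_set_bdd G₁)
  obtain ⟨M, hM, hMlen⟩ := Nat.sSup_mem (grundy_set_nonempty G₂) (grundy_set_bdd G₂)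
  obtain ⟨hndL, hlegL⟩ := hL
  obtain ⟨hndM, hlegM⟩ := hM
  choose w hw hw2 using hlegL
  choose z hz hz2 using hlegM
  set f : Fin (L.length * M.length) → α × β :=
    fun k => (L.get k.divNat, M.get k.modNat) with hfdef
  set S : List (α × β) := List.ofFn f with hS
  -- index decomposition facts
  have hdec : ∀ k : Fin (L.length * M.length),
      (k : ℕ) = M.length * (k.divNat : ℕ) + (k.modNat : ℕ) :=
    fun k => (Nat.div_add_mod (k : ℕ) M.length).symm
  have hlt : ∀ i j : Fin (L.length * M.length), (j : ℕ) < (i : ℕ) →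
      j.divNat < i.divNat ∨ (j.divNat = i.divNat ∧ j.modNat < i.modNat) := by
    intro i j hji
    rcases lt_trichotomy (j.divNat : ℕ) (i.divNat : ℕ) with h | h | h
    · exact Or.inl h
    · refine Or.inr ⟨Fin.ext h, ?_⟩
      have e1 := hdec i; have e2 := hdec j
      rw [h] at e2
      have hlt' : (j.modNat : ℕ) < (i.modNat : ℕ) := by omega
      exact hlt'
    · exfalso
      have h1 := hdec i; have h2 := hdec j
      have hmi : (i.modNat : ℕ) < M.length := i.modNat.2
      have h3 : M.length * ((i.divNat : ℕ) + 1) ≤ M.length * (j.divNat : ℕ) :=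
        Nat.mul_le_mul_left _ h
      have h4 : M.length * ((i.divNat : ℕ) + 1)
          = M.length * (i.divNat : ℕ) + M.length := by ring
      omega
  have hinj : Function.Injective f := by
    intro a b hab
    have h1 : L.get a.divNat = L.get b.divNat := congrArg Prod.fst hab
    have h2 : M.get a.modNat = M.get b.modNat := congrArg Prod.snd hab
    have e1 : a.divNat = b.divNat := List.nodup_iff_injective_get.mp hndL h1
    have e2 : a.modNat = b.modNat := List.nodup_iff_injective_get.mp hndM h2
    apply Fin.ext
    rw [hdec a, hdec b, e1, e2]
  have hSlegal : IsOpenLegal (directProd G₁ G₂) S := by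
    refine ⟨List.nodup_ofFn.mpr hinj, ?_⟩
    intro i
    set i' : Fin (L.length * M.length) := Fin.cast (List.length_ofFn (f := f)) i with hi'
    have hgi : S.get i = f i' := List.get_ofFn f i
    refine ⟨(w i'.divNat, z i'.modNat), ?_, ?_⟩
    · rw [hgi]
      exact ⟨hw _, hz _⟩
    · intro j hji hadj
      set j' : Fin (L.length * M.length) := Fin.cast (List.length_ofFn (f := f)) j with hj'
      have hgj : S.get j = f j' := List.get_ofFn f j
      rw [hgj] at hadj
      have hji' : (j' : ℕ) < (i' : ℕ) := hji
      rcases hlt i' j' hji' with h | ⟨h, h'⟩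
      · exact hw2 i'.divNat j'.divNat h hadj.1
      · exact hz2 i'.modNat j'.modNat h' hadj.2
  have hmem : L.length * M.length ∈
      {n | ∃ S' : List (α × β), IsOpenLegal (directProd G₁ G₂) S' ∧ S'.length = n} :=
    ⟨S, hSlegal, by rw [hS, List.length_ofFn]⟩
  unfold grundyT
  rw [← hLlen, ← hMlen]
  exact le_csSup (grundy_set_bdd (directProd G₁ G₂)) hmem

end Aux2

theorem grundyT_directProd_eq_two_bc {α β : Type*} [Fintype α] [Fintype β]
    (G₁ : SimpleGraph α) (G₂ : SimpleGraph β)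
    (h₁ : grundyT G₁ = 2 * bc G₁) (h₂ : grundyT G₂ = 2 * bc G₂) :
    grundyT (directProd G₁ G₂) = 2 * bc (directProd G₁ G₂) := by
  obtain ⟨A₁, B₁, hAB₁, hc₁⟩ := bc_mem G₁
  obtain ⟨A₂, B₂, hAB₂, hc₂⟩ := bc_mem G₂
  have hub := grundyT_le_two_bc (directProd G₁ G₂)
  have hbc : bc (directProd G₁ G₂) ≤ 2 * bc G₁ * bc G₂ :=
    bc_prod_le G₁ G₂ hAB₁ hc₁ hAB₂ hc₂
  have hlb := grundyT_prod_ge G₁ G₂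
  rw [h₁, h₂] at hlb
  refine le_antisymm hub ?_
  calc 2 * bc (directProd G₁ G₂) ≤ 2 * (2 * bc G₁ * bc G₂) := by omega
    _ = 2 * bc G₁ * (2 * bc G₂) := by ring
    _ ≤ _ := hlb
end

section
/- For any graphs G and H with no isolated vertices, γ_gr^t(G ∘ H) ≥ α(G) · γ_gr^t(H), where α(G) is the independence number of G and ∘ is the lexicographic product. -/
open SimpleGraph

private lemma prod_getElem {γ δ : Type*} (l₁ : List γ) (l₂ : List δ) :
    ∀ (i : ℕ) (h : i < (l₁ ×ˢ l₂).length)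
      (hq : i / l₂.length < l₁.length) (hr : i % l₂.length < l₂.length),
    (l₁ ×ˢ l₂)[i] = (l₁[i / l₂.length], l₂[i % l₂.length]) := by
  induction l₁ with
  | nil => intro i h hq hr; simp at hq
  | cons a l₁ ih =>
    intro i h hq hr
    have h2 : i < (List.map (fun b => (a, b)) l₂ ++ l₁ ×ˢ l₂).length := by
      rw [← List.product_cons]; exact h
    rw [List.getElem_of_eq (List.product_cons a l₁ l₂) h]
    by_cases hc : i < l₂.length
    · rw [List.getElem_append_left (by simpa using hc)]
      simp [Nat.div_eq_of_lt hc, Nat.mod_eq_of_lt hc]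
    · push_neg at hc
      have ht : 0 < l₂.length := lt_of_le_of_lt (Nat.zero_le _) hr
      obtain ⟨k, rfl⟩ := Nat.exists_eq_add_of_le' hc
      rw [Nat.add_div_right _ ht] at hq
      rw [Nat.add_mod_right] at hr
      simp only [Nat.add_div_right _ ht, Nat.add_mod_right]
      rw [List.getElem_append_right (by simp)]
      have h' : k < (l₁ ×ˢ l₂).length := by
        simp only [List.length_append, List.length_map] at h2
        omega
      simp only [List.length_map, Nat.add_sub_cancel]
      rw [ih k h' (by simp only [List.length_cons] at hq; omega) hr]
      simp

theorem grundyT_lexProd_ge_indep {α β : Type*} [Fintype α] [Fintype β]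
    (G : SimpleGraph α) (H : SimpleGraph β)
    (hG : ∀ v, ∃ w, G.Adj v w) (hH : ∀ v, ∃ w, H.Adj v w) :
    _root_.indepNum G * grundyT H ≤ grundyT (lexProd G H) := by
  classical
  have hbG : BddAbove {n | ∃ S : Finset α, S.card = n ∧ ∀ u ∈ S, ∀ v ∈ S, ¬ G.Adj u v} := by
    refine ⟨Fintype.card α, ?_⟩
    rintro n ⟨S, rfl, -⟩
    simpa using Finset.card_le_card (Finset.subset_univ S)
  have hnG : {n | ∃ S : Finset α, S.card = n ∧ ∀ u ∈ S, ∀ v ∈ S, ¬ G.Adj u v}.Nonempty :=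
    ⟨0, ∅, by simp⟩
  obtain ⟨S, hScard, hSind⟩ := Nat.sSup_mem hnG hbG
  have hbH : BddAbove {n | ∃ L : List β, IsOpenLegal H L ∧ L.length = n} := by
    refine ⟨Fintype.card β, ?_⟩
    rintro n ⟨L, hL, rfl⟩
    exact hL.1.length_le_card
  have hnH : {n | ∃ L : List β, IsOpenLegal H L ∧ L.length = n}.Nonempty :=
    ⟨0, [], ⟨List.nodup_nil, fun i => absurd i.isLt (by simp)⟩, rfl⟩
  obtain ⟨L, hL, hLlen⟩ := Nat.sSup_mem hnH hbH
  have hTlen : S.toList.length = S.card := Finset.length_toList S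
  have hTnd : S.toList.Nodup := S.nodup_toList
  have hMlen : (S.toList ×ˢ L).length = S.card * L.length := by
    rw [List.length_product, hTlen]
  have hMlegal : IsOpenLegal (lexProd G H) (S.toList ×ˢ L) := by
    constructor
    · exact hTnd.product hL.1
    · intro i
      have hi : (i : ℕ) < S.toList.length * L.length :=
        lt_of_lt_of_eq i.isLt (List.length_product _ _)
      have ht : 0 < L.length := by
        rcases Nat.eq_zero_or_pos L.length with h0 | h0
        · rw [h0, Nat.mul_zero] at hi; omega
        · exact h0
      have hr : (i : ℕ) % L.length < L.length := Nat.mod_lt _ ht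
      have hq : (i : ℕ) / L.length < S.toList.length := (Nat.div_lt_iff_lt_mul ht).mpr hi
      have hget : (S.toList ×ˢ L).get i = (S.toList[(i : ℕ) / L.length], L[(i : ℕ) % L.length]) := by
        rw [List.get_eq_getElem]
        exact prod_getElem S.toList L i i.isLt hq hr
      obtain ⟨w, hw1, hw2⟩ := hL.2 ⟨(i : ℕ) % L.length, hr⟩
      refine ⟨(S.toList[(i : ℕ) / L.length], w), ?_, ?_⟩
      · rw [hget]
        exact Or.inr ⟨rfl, by simpa using hw1⟩
      · intro j hj hadj
        have hj' : (j : ℕ) < S.toList.length * L.length :=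
          lt_of_lt_of_eq j.isLt (List.length_product _ _)
        have hr' : (j : ℕ) % L.length < L.length := Nat.mod_lt _ ht
        have hq' : (j : ℕ) / L.length < S.toList.length := (Nat.div_lt_iff_lt_mul ht).mpr hj'
        have hgetj : (S.toList ×ˢ L).get j
            = (S.toList[(j : ℕ) / L.length], L[(j : ℕ) % L.length]) := by
          rw [List.get_eq_getElem]
          exact prod_getElem S.toList L j j.isLt hq' hr'
        rw [hgetj] at hadj
        rcases hadj with hadj | ⟨heq, hadj⟩
        · exact hSind _ (Finset.mem_toList.mp (List.getElem_mem _))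
            _ (Finset.mem_toList.mp (List.getElem_mem _)) hadj
        · have hqq : (j : ℕ) / L.length = (i : ℕ) / L.length :=
            hTnd.getElem_inj_iff.mp heq
          have hlt : (j : ℕ) % L.length < (i : ℕ) % L.length := by
            have e1 := Nat.div_add_mod (j : ℕ) L.length
            have e2 := Nat.div_add_mod (i : ℕ) L.length
            rw [hqq] at e1
            have : (j : ℕ) < (i : ℕ) := hj
            omega
          exact hw2 ⟨(j : ℕ) % L.length, hr'⟩ (Fin.mk_lt_mk.mpr hlt) (by simpa using hadj)
  have hmem : S.card * L.length ∈
      {n | ∃ L' : List (α × β), IsOpenLegal (lexProd G H) L' ∧ L'.length = n} :=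
    ⟨S.toList ×ˢ L, hMlegal, hMlen⟩
  have hbP : BddAbove {n | ∃ L' : List (α × β), IsOpenLegal (lexProd G H) L' ∧ L'.length = n} := by
    refine ⟨Fintype.card (α × β), ?_⟩
    rintro n ⟨L', hL', rfl⟩
    exact hL'.1.length_le_card
  calc _root_.indepNum G * grundyT H = S.card * L.length := by rw [hScard, hLlen]; rfl
    _ ≤ grundyT (lexProd G H) := le_csSup hbP hmem
end
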